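/- Let Φ ∈ ℝ^{m×N} satisfy the Restricted Isometry Property with constant δ_k for sparsity k. Let Γ♯ ⊆ {1,…,N} with |Γ♯| ≤ k, let I ⊆ Γ♯ be nonempty, and let r ∈ ℝ^m be a nonzero vector in the column span of Φ_{Γ♯} such that ‖Φ_I* r‖_∞ = ‖Φ* r‖_∞ (i.e., I contains an index maximizing |⟨φ_i, r⟩|). Define the matching pursuit step r' = r − Φ_I Φ_I* r. Then ‖r'‖₂² ≤ (1 − (1−δ_k)²/k) · ‖r‖₂². -/

import Mathlib

open scoped BigOperators
open Matrix

/-- The Euclidean (ℓ²) norm of a finitely-indexed real vector. -/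
noncomputable def l2 {ι : Type*} [Fintype ι] (x : ι → ℝ) : ℝ :=
  Real.sqrt (∑ i, x i ^ 2)

/-- The supremum (ℓ∞) norm of a finitely-indexed real vector. -/
noncomputable def linf {ι : Type*} [Fintype ι] (x : ι → ℝ) : ℝ :=
  ⨆ i, |x i|

/-- The Euclidean inner product. -/
def dot {ι : Type*} [Fintype ι] (x y : ι → ℝ) : ℝ := ∑ i, x i * y i

/-- A vector is `k`-sparse if it has at most `k` nonzero entries. -/
def Sparse {N : ℕ} (k : ℕ) (x : Fin N → ℝ) : Prop :=
  ∃ Γ : Finset (Fin N), Γ.card ≤ k ∧ ∀ i ∉ Γ, x i = 0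

/-- `Φ` satisfies the Restricted Isometry Property with constant `δ ∈ (0,1)` for sparsity `k`. -/
def RIP {m N : ℕ} (Φ : Matrix (Fin m) (Fin N) ℝ) (k : ℕ) (δ : ℝ) : Prop :=
  0 < δ ∧ δ < 1 ∧
    ∀ x : Fin N → ℝ, Sparse k x →
      (1 - δ) * l2 x ^ 2 ≤ l2 (Φ.mulVec x) ^ 2 ∧
      l2 (Φ.mulVec x) ^ 2 ≤ (1 + δ) * l2 x ^ 2

/-- The column submatrix `Φ_Γ` of `Φ` formed by the columns indexed by `Γ`. -/
def colSub {m N : ℕ} (Φ : Matrix (Fin m) (Fin N) ℝ) (Γ : Finset (Fin N)) :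
    Matrix (Fin m) (↥Γ) ℝ := fun i j => Φ i j.1

/- ### auxiliary lemmas -/

lemma aux_l2_sq {ι : Type*} [Fintype ι] (x : ι → ℝ) : l2 x ^ 2 = ∑ i, x i ^ 2 := by
  have h : 0 ≤ ∑ i, x i ^ 2 := Finset.sum_nonneg fun i _ => sq_nonneg _
  simpa [l2] using Real.sq_sqrt h

lemma aux_abs_le_linf {ι : Type*} [Fintype ι] (x : ι → ℝ) (i : ι) : |x i| ≤ linf x := by
  show |x i| ≤ ⨆ i, |x i|
  exact le_ciSup (Set.Finite.bddAbove (Set.finite_range fun i => |x i|)) i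

lemma aux_linf_nonneg {ι : Type*} [Fintype ι] [Nonempty ι] (x : ι → ℝ) : 0 ≤ linf x :=
  le_trans (abs_nonneg _) (aux_abs_le_linf x (Classical.arbitrary ι))

/-- extension of a vector on `↥Γ` by zero to `Fin N`. -/
noncomputable def extΓ {N : ℕ} (Γ : Finset (Fin N)) (w : ↥Γ → ℝ) : Fin N → ℝ :=
  fun i => if h : i ∈ Γ then w ⟨i, h⟩ else 0

lemma aux_ext_mulVec {m N : ℕ} (Φ : Matrix (Fin m) (Fin N) ℝ) (Γ : Finset (Fin N))
    (w : ↥Γ → ℝ) : Φ.mulVec (extΓ Γ w) = (colSub Φ Γ).mulVec w := by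
  funext i
  show ∑ j, Φ i j * extΓ Γ w j = ∑ j : ↥Γ, colSub Φ Γ i j * w j
  calc ∑ j : Fin N, Φ i j * extΓ Γ w j
      = ∑ j ∈ Γ, Φ i j * extΓ Γ w j :=
        (Finset.sum_subset (Finset.subset_univ Γ) (fun j _ hj => by simp [extΓ, hj])).symm
    _ = ∑ j ∈ Γ.attach, Φ i j.1 * extΓ Γ w j.1 :=
        (Finset.sum_attach Γ (fun j => Φ i j * extΓ Γ w j)).symm
    _ = ∑ j : ↥Γ, colSub Φ Γ i j * w j := by
        rw [Finset.univ_eq_attach]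
        exact Finset.sum_congr rfl (fun j _ => by simp [extΓ, colSub, j.2])

lemma aux_ext_sumsq {N : ℕ} (Γ : Finset (Fin N)) (w : ↥Γ → ℝ) :
    ∑ i, extΓ Γ w i ^ 2 = ∑ j : ↥Γ, w j ^ 2 := by
  calc ∑ i : Fin N, extΓ Γ w i ^ 2
      = ∑ i ∈ Γ, extΓ Γ w i ^ 2 :=
        (Finset.sum_subset (Finset.subset_univ Γ) (fun j _ hj => by simp [extΓ, hj])).symm
    _ = ∑ j ∈ Γ.attach, extΓ Γ w j.1 ^ 2 :=
        (Finset.sum_attach Γ (fun j => extΓ Γ w j ^ 2)).symm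
    _ = ∑ j : ↥Γ, w j ^ 2 := by
        rw [Finset.univ_eq_attach]
        exact Finset.sum_congr rfl (fun j _ => by simp [extΓ, j.2])

lemma aux_ext_sparse {N k : ℕ} (Γ : Finset (Fin N)) (hΓ : Γ.card ≤ k) (w : ↥Γ → ℝ) :
    Sparse k (extΓ Γ w) :=
  ⟨Γ, hΓ, fun i hi => dif_neg hi⟩

/-- one matching pursuit step `r' = r − Φ_I Φ_I* r` reduces the residual
energy by the factor `1 − (1−δ)²/k`, provided the selected set `I` is a nonempty subset of
the true support `Γ♯` (with `|Γ♯| ≤ k`), the residual `r ≠ 0` lies in the column span of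
`Φ_{Γ♯}`, and `I` contains an index maximizing `|⟨φ_i, r⟩|`. -/
theorem stmt12 {m N : ℕ} (Φ : Matrix (Fin m) (Fin N) ℝ) (k : ℕ) (δ : ℝ)
    (hRIP : RIP Φ k δ) (Γs I : Finset (Fin N)) (hΓs : Γs.card ≤ k)
    (hsub : I ⊆ Γs) (hne : I.Nonempty)
    (r : Fin m → ℝ) (hr0 : r ≠ 0)
    (hr : ∃ w : ↥Γs → ℝ, r = (colSub Φ Γs).mulVec w)
    (hmax : linf ((colSub Φ I)ᵀ.mulVec r) = linf (Φᵀ.mulVec r))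
    (r' : Fin m → ℝ) (hr' : r' = r - (colSub Φ I).mulVec ((colSub Φ I)ᵀ.mulVec r)) :
    l2 r' ^ 2 ≤ (1 - (1 - δ) ^ 2 / k) * l2 r ^ 2 := by
  obtain ⟨hδ0, hδ1, hrip⟩ := hRIP
  obtain ⟨w, hw⟩ := hr
  have hIne : Nonempty ↥I := ⟨⟨hne.choose, hne.choose_spec⟩⟩
  have hΓne : Nonempty ↥Γs := ⟨⟨hne.choose, hsub hne.choose_spec⟩⟩
  set c : ↥I → ℝ := (colSub Φ I)ᵀ.mulVec r with hc
  set v : ↥Γs → ℝ := (colSub Φ Γs)ᵀ.mulVec r with hv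
  set R : ℝ := ∑ i, r i ^ 2 with hR
  set C : ℝ := ∑ j, c j ^ 2 with hC
  set V : ℝ := ∑ j, v j ^ 2 with hV
  have hδ1' : (0:ℝ) < 1 - δ := by linarith
  have hk0 : 0 < k := lt_of_lt_of_le (Finset.card_pos.mpr (hne.mono hsub)) hΓs
  have hkR : (0:ℝ) < (k:ℝ) := by exact_mod_cast hk0
  -- R > 0
  have hRpos : 0 < R := by
    rcases Function.ne_iff.mp hr0 with ⟨i, hi⟩
    have : 0 < r i ^ 2 := pow_two_pos_of_ne_zero hi
    exact lt_of_lt_of_le this (Finset.single_le_sum (f := fun i => r i ^ 2)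
      (fun i _ => sq_nonneg _) (Finset.mem_univ i))
  -- the vector u = Φ_I c
  set u : Fin m → ℝ := (colSub Φ I).mulVec c with hu
  -- basic identity: ⟨r, u⟩ = C
  have hcj : ∀ j : ↥I, c j = ∑ i, Φ i j.1 * r i := by
    intro j; simp [hc, Matrix.mulVec, Matrix.transpose, colSub, dotProduct]
  have hru : ∑ i, r i * u i = C := by
    calc ∑ i, r i * u i = ∑ i, ∑ j : ↥I, r i * (Φ i j.1 * c j) := by
          apply Finset.sum_congr rfl; intro i _
          simp [hu, Matrix.mulVec, colSub, dotProduct, Finset.mul_sum]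
      _ = ∑ j : ↥I, (∑ i, Φ i j.1 * r i) * c j := by
          rw [Finset.sum_comm]
          apply Finset.sum_congr rfl; intro j _
          rw [Finset.sum_mul]; apply Finset.sum_congr rfl; intro i _; ring
      _ = C := by
          apply Finset.sum_congr rfl; intro j _
          rw [← hcj j]; ring
  -- expansion of the residual energy
  have hexp : l2 r' ^ 2 = R - 2 * C + ∑ i, u i ^ 2 := by
    rw [aux_l2_sq, hr']
    have : ∑ i, (r i - u i) ^ 2 = ∑ i, r i ^ 2 - 2 * (∑ i, r i * u i) + ∑ i, u i ^ 2 := by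
      calc ∑ i, (r i - u i) ^ 2
          = ∑ i, (r i ^ 2 - 2 * (r i * u i) + u i ^ 2) := by
            apply Finset.sum_congr rfl; intro i _; ring
        _ = ∑ i, r i ^ 2 - 2 * (∑ i, r i * u i) + ∑ i, u i ^ 2 := by
            rw [Finset.sum_add_distrib, Finset.sum_sub_distrib, Finset.mul_sum]
    simpa [hru] using this
  -- RIP upper bound on u
  have hupper : ∑ i, u i ^ 2 ≤ (1 + δ) * C := by
    have h := (hrip (extΓ I c) (aux_ext_sparse I (le_trans (Finset.card_le_card hsub) hΓs) c)).2
    rwa [aux_ext_mulVec, aux_l2_sq, aux_l2_sq, aux_ext_sumsq] at h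
  -- RIP lower bound applied to w
  have hlower : (1 - δ) * ∑ j, w j ^ 2 ≤ R := by
    have h := (hrip (extΓ Γs w) (aux_ext_sparse Γs hΓs w)).1
    rw [aux_ext_mulVec, aux_l2_sq, aux_l2_sq, aux_ext_sumsq, ← hw] at h
    exact h
  -- ⟨v, w⟩ = R
  have hvw : ∑ j, v j * w j = R := by
    calc ∑ j : ↥Γs, v j * w j = ∑ j : ↥Γs, (∑ i, Φ i j.1 * r i) * w j := by
          apply Finset.sum_congr rfl; intro j _
          simp [hv, Matrix.mulVec, Matrix.transpose, colSub, dotProduct]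
      _ = ∑ i, ∑ j : ↥Γs, r i * (colSub Φ Γs i j * w j) := by
          rw [Finset.sum_comm]
          apply Finset.sum_congr rfl; intro j _
          rw [Finset.sum_mul]; apply Finset.sum_congr rfl; intro i _
          simp [colSub]; ring
      _ = ∑ i, r i * r i := by
          apply Finset.sum_congr rfl; intro i _
          rw [← Finset.mul_sum, hw]
          rfl
      _ = R := by apply Finset.sum_congr rfl; intro i _; ring
  -- Cauchy–Schwarz gives (1-δ) R ≤ V
  have hVlb : (1 - δ) * R ≤ V := by
    have hcs := Finset.sum_mul_sq_le_sq_mul_sq Finset.univ v w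
    rw [hvw] at hcs
    have hW : (1 - δ) * ∑ j, w j ^ 2 ≤ R := hlower
    nlinarith [Finset.sum_nonneg (fun j (_ : j ∈ Finset.univ) => sq_nonneg (v j)),
      Finset.sum_nonneg (fun j (_ : j ∈ Finset.univ) => sq_nonneg (w j))]
  -- V ≤ k * (linf v)^2
  have hVub : V ≤ (k:ℝ) * linf v ^ 2 := by
    have h1 : V ≤ (Γs.card : ℝ) * linf v ^ 2 := by
      have := Finset.sum_le_card_nsmul Finset.univ (fun j => v j ^ 2) (linf v ^ 2)
        (fun j _ => by
          show v j ^ 2 ≤ linf v ^ 2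
          rw [← sq_abs (v j)]
          exact pow_le_pow_left₀ (abs_nonneg _) (aux_abs_le_linf v j) 2)
      simpa [Fintype.card_coe, nsmul_eq_mul, hV] using this
    refine le_trans h1 (mul_le_mul_of_nonneg_right ?_ (sq_nonneg _))
    exact_mod_cast hΓs
  -- linf v ≤ linf c
  have hlinf : linf v ≤ linf c := by
    rw [hmax]
    refine ciSup_le fun j => ?_
    have : v j = (Φᵀ.mulVec r) j.1 := by
      simp [hv, Matrix.mulVec, Matrix.transpose, colSub, dotProduct]
    rw [this]
    exact aux_abs_le_linf _ _
  -- (linf c)^2 ≤ C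
  have hCb : linf c ^ 2 ≤ C := by
    have hCnn : 0 ≤ C := Finset.sum_nonneg fun j _ => sq_nonneg _
    have h1 : linf c ≤ Real.sqrt C := by
      refine ciSup_le fun j => ?_
      rw [← Real.sqrt_sq_eq_abs]
      exact Real.sqrt_le_sqrt (Finset.single_le_sum (f := fun j => c j ^ 2)
        (fun j _ => sq_nonneg _) (Finset.mem_univ j))
    calc linf c ^ 2 ≤ Real.sqrt C ^ 2 :=
          pow_le_pow_left₀ (aux_linf_nonneg c) h1 2
      _ = C := Real.sq_sqrt hCnn
  -- combine: (1-δ) R ≤ k * C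
  have hkey : (1 - δ) * R ≤ (k:ℝ) * C := by
    refine le_trans hVlb (le_trans hVub ?_)
    refine mul_le_mul_of_nonneg_left ?_ (le_of_lt hkR)
    exact le_trans (pow_le_pow_left₀ (aux_linf_nonneg v) hlinf 2) hCb
  -- finish
  have hl2r : l2 r ^ 2 = R := aux_l2_sq r
  rw [hl2r, hexp]
  have h2 : (1 - δ) ^ 2 * R ≤ (1 - δ) * C * k := by nlinarith [hkey]
  have h3 : (1 - δ) ^ 2 * R / k ≤ (1 - δ) * C := (div_le_iff₀ hkR).mpr h2
  have e : (1 - (1 - δ) ^ 2 / (k:ℝ)) * R = R - (1 - δ) ^ 2 * R / k := by ring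
  linarith [hupper]
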